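/- Let q be a prime power, let k ≥ b ≥ 1 be integers, and let γ be a primitive element of F_{q^k}. Then the extended code C̃ = { ((Tr_{q^k/q}(g·γ^i) + y)_{i=0}^{q^k - 2}, y) : g ∈ F_{q^k}, y ∈ F_q } is an F_q-linear subspace of F_q^{q^k} of dimension k + 1, and its minimum b-symbol distance equals q^k - q^{k-b}. -/

import Mathlib

/-- The `b`-symbol weight of a vector `c ∈ F^n` (coordinates indexed cyclically by `ZMod n`). -/
noncomputable def bWt {n : ℕ} {F : Type*} [Zero F] (b : ℕ) (c : ZMod n → F) : ℕ :=
  Nat.card {i : ZMod n | ∃ j < b, c (i + (j : ZMod n)) ≠ 0}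

open Module IntermediateField

lemma aux_ker_card {F E : Type*} [Field F] [Fintype F] [Field E] [Fintype E] [Algebra F E]
    (k d : ℕ) (hd : d ≤ k) (hk : finrank F E = k)
    (γ : E) (hli : LinearIndependent F fun j : Fin d => γ ^ (j : ℕ))
    (a : E) (ha : a ≠ 0) :
    Nat.card {x : E | ∀ j < d, Algebra.trace F E (a * (γ ^ j * x)) = 0}
      = Fintype.card F ^ (k - d) := by
  classical
  set ψ : E →ₗ[F] (Fin d → F) :=
    LinearMap.pi (fun j : Fin d => Algebra.traceForm F E (a * γ ^ (j : ℕ))) with hψ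
  have hψx : ∀ (x : E) (j : Fin d), ψ x j = Algebra.trace F E (a * (γ ^ (j : ℕ) * x)) := by
    intro x j
    simp [hψ, LinearMap.pi_apply, Algebra.traceForm_apply, mul_assoc]
  have hset : {x : E | ∀ j < d, Algebra.trace F E (a * (γ ^ j * x)) = 0}
      = (LinearMap.ker ψ : Set E) := by
    ext x
    simp only [Set.mem_setOf_eq, SetLike.mem_coe, LinearMap.mem_ker]
    constructor
    · intro h; funext j; rw [hψx]; exact (h j j.isLt).trans rfl
    · intro h j hj
      have := congrFun h ⟨j, hj⟩
      rw [hψx] at this; simpa using this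
  have hsurj : Function.Surjective ψ := by
    rw [← LinearMap.range_eq_top]
    by_contra hne
    obtain ⟨f, hf0, hfbot⟩ := Submodule.exists_dual_map_eq_bot_of_lt_top
      (lt_top_iff_ne_top.mpr hne) inferInstance
    set lam : Fin d → F := fun j => f (Pi.single j 1) with hlam
    have hfv : ∀ v : Fin d → F, f v = ∑ j, v j * lam j := by
      intro v
      have hv : v = ∑ j, v j • (Pi.single j (1 : F) : Fin d → F) := by
        funext i
        simp [Finset.sum_apply, Pi.single_apply, Finset.sum_ite_eq]
      conv_lhs => rw [hv]
      rw [map_sum]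
      simp [hlam, smul_eq_mul]
    have hvan : ∀ x : E, f (ψ x) = 0 := by
      intro x
      have : f (ψ x) ∈ Submodule.map f (LinearMap.range ψ) :=
        ⟨ψ x, LinearMap.mem_range_self ψ x, rfl⟩
      rw [hfbot] at this
      exact (Submodule.mem_bot F).mp this
    have hz : ∀ x : E, Algebra.trace F E ((a * ∑ j, lam j • γ ^ (j : ℕ)) * x) = 0 := by
      intro x
      have h1 := hvan x
      rw [hfv] at h1
      calc Algebra.trace F E ((a * ∑ j, lam j • γ ^ (j : ℕ)) * x)
          = ∑ j, ψ x j * lam j := by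
            rw [Finset.mul_sum, Finset.sum_mul, map_sum]
            congr 1; funext j
            rw [hψx, mul_smul_comm, smul_mul_assoc, map_smul, smul_eq_mul, mul_comm, mul_assoc]
        _ = 0 := h1
    have hmul0 : a * ∑ j, lam j • γ ^ (j : ℕ) = 0 := by
      have hn := traceForm_nondegenerate F E
      exact hn.1 _ (fun x => by simpa [Algebra.traceForm_apply] using hz x)
    have hsum0 : ∑ j, lam j • γ ^ (j : ℕ) = 0 := by
      rcases mul_eq_zero.mp hmul0 with h | h
      · exact absurd h ha
      · exact h
    have hlam0 : ∀ j, lam j = 0 := Fintype.linearIndependent_iff.mp hli lam hsum0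
    apply hf0
    refine LinearMap.ext fun v => ?_
    rw [hfv]
    simp [hlam0]
  have h2 : finrank F (LinearMap.range ψ) = d := by
    rw [LinearMap.range_eq_top.mpr hsurj]
    rw [finrank_top]
    simp
  have h1 : finrank F (LinearMap.ker ψ) = k - d := by
    have := LinearMap.finrank_range_add_finrank_ker ψ
    rw [h2, hk] at this
    omega
  rw [hset]
  rw [Nat.card_coe_set_eq, ← Nat.card_coe_set_eq, Nat.card_eq_fintype_card]
  rw [show (Fintype.card ↥((LinearMap.ker ψ : Submodule F E) : Set E))
      = Fintype.card ↥(LinearMap.ker ψ) from rfl]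
  rw [card_eq_pow_finrank (K := F), h1]

lemma aux_li {F E : Type*} [Field F] [Fintype F] [Field E] [Fintype E] [Algebra F E]
    (k d : ℕ) (hd : d ≤ k) (hk : finrank F E = k)
    (γ : E) (hγ : ∀ x : E, x ≠ 0 → ∃ m : ℕ, γ ^ m = x) :
    LinearIndependent F fun j : Fin d => γ ^ (j : ℕ) := by
  have hadj : F⟮γ⟯ = ⊤ := by
    rw [eq_top_iff]
    intro x _
    by_cases hx : x = 0
    · rw [hx]; exact zero_mem _
    · obtain ⟨m, rfl⟩ := hγ x hx
      exact pow_mem (IntermediateField.mem_adjoin_simple_self F γ) m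
  have hdeg : (minpoly F γ).natDegree = k := by
    have h1 : finrank F F⟮γ⟯ = (minpoly F γ).natDegree :=
      IntermediateField.adjoin.finrank (Algebra.IsIntegral.isIntegral γ)
    rw [← h1, hadj, IntermediateField.finrank_top', hk]
  have h := linearIndependent_pow (K := F) γ
  rw [hdeg] at h
  have h2 := h.comp (Fin.castLE hd) (Fin.castLE_injective hd)
  exact h2

/-- The extended code `C̃ = { ((Tr(g·γ^i) + y)_{i=0}^{q^k-2}, y) : g ∈ F_{q^k}, y ∈ F_q }`
is an `F_q`-linear subspace of `F_q^{q^k}` of dimension `k+1` whose minimum `b`-symbol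
distance equals `q^k - q^{k-b}`. -/
theorem stmt15 (q k b : ℕ) (hb : 1 ≤ b) (hkb : b ≤ k)
    (F E : Type*) [Field F] [Fintype F] [Field E] [Fintype E] [Algebra F E]
    (hF : Fintype.card F = q) (hE : Fintype.card E = q ^ k)
    (γ : E) (hγ : ∀ x : E, x ≠ 0 → ∃ m : ℕ, γ ^ m = x) :
    ∃ C : Submodule F (ZMod (q ^ k) → F),
      (C : Set (ZMod (q ^ k) → F)) =
        {c | ∃ (g : E) (y : F),
          c = fun i : ZMod (q ^ k) =>
            if i.val < q ^ k - 1 then Algebra.trace F E (g * γ ^ i.val) + y else y} ∧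
      Module.finrank F C = k + 1 ∧
      IsLeast {w | ∃ c ∈ C, c ≠ 0 ∧ bWt b c = w} (q ^ k - q ^ (k - b)) := by
  classical
  have hq2 : 2 ≤ q := by rw [← hF]; exact Fintype.one_lt_card
  have hn2 : 2 ≤ q ^ k := le_trans hq2 (Nat.le_self_pow (by omega) q)
  set n := q ^ k with hndef
  haveI : NeZero n := ⟨by omega⟩
  have hk : finrank F E = k := by
    have h := card_eq_pow_finrank (K := F) (V := E)
    rw [hF, hE] at h
    exact (Nat.pow_right_injective hq2 h.symm)
  have htr : ∀ g : E, (∀ x, Algebra.trace F E (g * x) = 0) → g = 0 := fun g h =>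
    (traceForm_nondegenerate F E).1 g (by simpa [Algebra.traceForm_apply] using h)
  have hbn : b < n := by
    have : k < 2 ^ k := Nat.lt_two_pow_self
    have : 2 ^ k ≤ q ^ k := Nat.pow_le_pow_left hq2 k
    omega
  have hγ1 : γ ≠ 0 → γ ^ (n - 1) = 1 := fun h => by
    rw [← hE]; exact FiniteField.pow_card_sub_one_eq_one γ h
  have hbγ : 2 ≤ b → γ ≠ 0 := by
    intro hb2 h0
    have hk2 : 2 ≤ k := le_trans hb2 hkb
    have hn4 : 4 ≤ n := by
      calc (4 : ℕ) = 2 ^ 2 := rfl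
        _ ≤ q ^ 2 := Nat.pow_le_pow_left hq2 2
        _ ≤ q ^ k := Nat.pow_le_pow_right (by omega) hk2
    have hinj : Function.Injective (fun x : E => decide (x = 0)) := by
      intro x y h
      have h' : (x = 0) ↔ (y = 0) := by
        simpa using decide_eq_decide.mp h
      by_cases hx : x = 0
      · rw [hx, (h'.mp hx)]
      · have hy : y ≠ 0 := fun hy => hx (h'.mpr hy)
        obtain ⟨mx, hmx⟩ := hγ x hx
        obtain ⟨my, hmy⟩ := hγ y hy
        have hx1 : x = 1 := by
          cases mx with
          | zero => rw [← hmx]; simp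
          | succ m => rw [← hmx, h0, zero_pow (Nat.succ_ne_zero m)] at hx ⊢; exact absurd rfl hx
        have hy1 : y = 1 := by
          cases my with
          | zero => rw [← hmy]; simp
          | succ m => rw [← hmy, h0, zero_pow (Nat.succ_ne_zero m)] at hy ⊢; exact absurd rfl hy
        rw [hx1, hy1]
    have := Fintype.card_le_of_injective _ hinj
    simp only [Fintype.card_bool] at this
    rw [hE] at this
    omega
  clear_value n
  clear hndef
  have hγmod : γ ≠ 0 → ∀ s : ℕ, γ ^ s = γ ^ (s % (n - 1)) := by
    intro h s
    conv_lhs => rw [← Nat.div_add_mod s (n - 1)]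
    rw [pow_add, pow_mul, hγ1 h, one_pow, one_mul]
  -- the point map
  set P : ZMod n → E := fun i => if i.val < n - 1 then γ ^ i.val else 0 with hPdef
  have hival : ∀ i : ZMod n, i.val < n := fun i => ZMod.val_lt i
  have hPsurj : Function.Surjective P := by
    intro x
    by_cases hx : x = 0
    · refine ⟨((n - 1 : ℕ) : ZMod n), ?_⟩
      have hv : ((n - 1 : ℕ) : ZMod n).val = n - 1 := ZMod.val_cast_of_lt (by omega)
      simp [hPdef, hv, hx]
    · obtain ⟨m, hm⟩ := hγ x hx
      refine ⟨((m % (n - 1) : ℕ) : ZMod n), ?_⟩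
      have hlt : m % (n - 1) < n - 1 := Nat.mod_lt _ (by omega)
      have hv : ((m % (n - 1) : ℕ) : ZMod n).val = m % (n - 1) :=
        ZMod.val_cast_of_lt (by omega)
      have hpow : γ ^ (m % (n - 1)) = x := by
        by_cases hγz : γ = 0
        · cases m with
          | zero => simpa using hm
          | succ m' =>
            rw [hγz, zero_pow (Nat.succ_ne_zero m')] at hm
            exact absurd hm.symm hx
        · rw [← hγmod hγz m, hm]
      simp [hPdef, hv, hlt, hpow]
  have hPbij : Function.Bijective P := by
    rw [Fintype.bijective_iff_surjective_and_card]
    refine ⟨hPsurj, ?_⟩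
    rw [ZMod.card, hE]
  have hPcard : ∀ s : Set E, (P ⁻¹' s).ncard = s.ncard := by
    intro s
    rw [← Nat.card_coe_set_eq, ← Nat.card_coe_set_eq]
    exact Nat.card_congr ((Equiv.ofBijective P hPbij).subtypeEquiv (fun i => Iff.rfl))
  -- codewords
  set cw : E → F → ZMod n → F := fun g y i => Algebra.trace F E (g * P i) + y with hcwdef
  have hcw_eq : ∀ g y, cw g y = fun i : ZMod n =>
      if i.val < n - 1 then Algebra.trace F E (g * γ ^ i.val) + y else y := by
    intro g y; funext i
    by_cases h : i.val < n - 1 <;> simp [hcwdef, hPdef, h]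
  set φ : (E × F) →ₗ[F] (ZMod n → F) :=
    { toFun := fun p => cw p.1 p.2
      map_add' := by
        intro p r; funext i
        show Algebra.trace F E ((p.1 + r.1) * P i) + (p.2 + r.2)
            = (Algebra.trace F E (p.1 * P i) + p.2) + (Algebra.trace F E (r.1 * P i) + r.2)
        rw [add_mul, map_add]; ring
      map_smul' := by
        intro c p; funext i
        show Algebra.trace F E ((c • p.1) * P i) + c • p.2
            = c • (Algebra.trace F E (p.1 * P i) + p.2)
        rw [smul_mul_assoc, map_smul, smul_add] } with hφdef
  have hφinj : Function.Injective φ := by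
    refine LinearMap.ker_eq_bot.mp (LinearMap.ker_eq_bot'.mpr ?_)
    rintro ⟨g, y⟩ hgy
    have hgy' : ∀ i : ZMod n, Algebra.trace F E (g * P i) + y = 0 := fun i => congrFun hgy i
    have hy : y = 0 := by
      have h := hgy' ((n - 1 : ℕ) : ZMod n)
      have hv : ((n - 1 : ℕ) : ZMod n).val = n - 1 := ZMod.val_cast_of_lt (by omega)
      simpa [hPdef, hv] using h
    have hg : g = 0 := by
      apply htr
      intro x
      obtain ⟨i, rfl⟩ := hPsurj x
      have h := hgy' i
      rw [hy, add_zero] at h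
      exact h
    simp [hg, hy, Prod.ext_iff]
  refine ⟨LinearMap.range φ, ?_, ?_, ?_⟩
  · ext c
    simp only [SetLike.mem_coe, LinearMap.mem_range, Set.mem_setOf_eq]
    constructor
    · rintro ⟨⟨g, y⟩, rfl⟩
      exact ⟨g, y, (hcw_eq g y)⟩
    · rintro ⟨g, y, rfl⟩
      exact ⟨(g, y), (hcw_eq g y)⟩
  · rw [LinearMap.finrank_range_of_inj hφinj, Module.finrank_prod, hk, Module.finrank_self]
  -- the b-symbol distance
  set ZW : (ZMod n → F) → Set (ZMod n) :=
    fun c => {i | ∀ j < b, c (i + (j : ZMod n)) = 0} with hZWdef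
  have hbwt : ∀ c : ZMod n → F, bWt b c = n - (ZW c).ncard := by
    intro c
    have hcompl : {i : ZMod n | ∃ j < b, c (i + (j : ZMod n)) ≠ 0} = (ZW c)ᶜ := by
      ext i
      simp only [hZWdef, Set.mem_compl_iff, Set.mem_setOf_eq]
      push_neg
      rfl
    have h := Set.ncard_add_ncard_compl (ZW c)
    rw [Nat.card_eq_fintype_card, ZMod.card] at h
    rw [bWt, Nat.card_coe_set_eq, hcompl]
    omega
  have hvaladd : ∀ (i : ZMod n) (j : ℕ), j < b → (i + (j : ZMod n)).val = (i.val + j) % n := by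
    intro i j hj
    rw [ZMod.val_add, ZMod.val_cast_of_lt (by omega)]
  have hc_at : ∀ (g : E) (y : F) (i : ZMod n) (j : ℕ), j < b →
      cw g y (i + (j : ZMod n)) =
        if (i.val + j) % n < n - 1
        then Algebra.trace F E (g * γ ^ ((i.val + j) % n)) + y else y := by
    intro g y i j hj
    have hv := hvaladd i j hj
    simp only [hcwdef, hPdef, hv]
    split_ifs with h
    · rfl
    · simp
  -- window lemma, type A
  have hwinA : ∀ (g : E) (y : F) (i : ZMod n), i.val + b < n →
      (i ∈ ZW (cw g y) ↔ ∀ j < b, Algebra.trace F E (g * (γ ^ j * γ ^ i.val)) + y = 0) := by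
    intro g y i hi
    have key : ∀ j, j < b → (cw g y (i + (j : ZMod n)) =
        Algebra.trace F E (g * (γ ^ j * γ ^ i.val)) + y) := by
      intro j hj
      rw [hc_at g y i j hj]
      have h1 : (i.val + j) % n = i.val + j := Nat.mod_eq_of_lt (by omega)
      have h2 : (i.val + j) % n < n - 1 := by omega
      rw [if_pos h2, h1]
      congr 2
      rw [pow_add]; ring
    constructor
    · intro h j hj
      rw [← key j hj]; exact h j hj
    · intro h j hj
      rw [hZWdef] at *
      rw [key j hj]
      exact h j hj
  -- window lemma, type B
  have hwinB : ∀ (g : E) (y : F) (i : ZMod n), n - b ≤ i.val →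
      (i ∈ ZW (cw g y) ↔ (y = 0 ∧
        ∀ t < b - 1, Algebra.trace F E (g * (γ ^ t * γ ^ (i.val % (n - 1)))) = 0)) := by
    intro g y i hi
    set u := i.val with hudef
    have hu : u < n := hival i
    have hj0 : n - 1 - u < b := by omega
    constructor
    · intro h
      have hy : y = 0 := by
        have h1 := h (n - 1 - u) hj0
        rw [hc_at g y i _ hj0] at h1
        have h2 : (u + (n - 1 - u)) % n = n - 1 := by
          rw [Nat.mod_eq_of_lt (by omega)]; omega
        rw [h2, if_neg (by omega)] at h1
        exact h1
      refine ⟨hy, ?_⟩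
      intro t ht
      have hb2 : 2 ≤ b := by omega
      have hγne : γ ≠ 0 := hbγ hb2
      by_cases hcase : t < n - 1 - u
      · -- j = t, no wrap
        have h1 := h t (by omega)
        rw [hc_at g y i t (by omega)] at h1
        have h2 : (u + t) % n = u + t := Nat.mod_eq_of_lt (by omega)
        rw [h2, if_pos (by omega), hy, add_zero] at h1
        rw [← h1]
        congr 1
        have hult : u < n - 1 := by omega
        have : u % (n - 1) = u := Nat.mod_eq_of_lt (by omega)
        rw [this, pow_add]; ring
      · -- j = t + 1, wraps
        have hj : t + 1 < b := by omega
        have h1 := h (t + 1) hj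
        rw [hc_at g y i (t + 1) hj] at h1
        have hge : n ≤ u + (t + 1) := by omega
        have h2 : (u + (t + 1)) % n = u + t + 1 - n := by
          rw [Nat.mod_eq_sub_mod hge, Nat.mod_eq_of_lt (by omega)]
          omega
        rw [h2, if_pos (by omega), hy, add_zero] at h1
        rw [← h1]
        congr 1
        have harg : γ ^ t * γ ^ (u % (n - 1)) = γ ^ (u + t + 1 - n) := by
          rw [← pow_add, hγmod hγne (t + u % (n - 1)), hγmod hγne (u + t + 1 - n)]
          congr 1
          by_cases hun : u = n - 1
          · rw [hun]
            rw [Nat.mod_self, Nat.mod_eq_of_lt (by omega), Nat.mod_eq_of_lt (by omega)]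
            omega
          · have hu2 : u % (n - 1) = u := Nat.mod_eq_of_lt (by omega)
            rw [hu2]
            have hbig : n - 1 ≤ t + u := by omega
            rw [Nat.mod_eq_sub_mod hbig, Nat.mod_eq_of_lt (by omega),
              Nat.mod_eq_of_lt (by omega)]
            omega
        rw [harg]
    · rintro ⟨hy, hV⟩
      intro j hj
      rw [hc_at g y i j hj]
      by_cases hcase1 : j = n - 1 - u
      · have h2 : (u + j) % n = n - 1 := by
          rw [hcase1, Nat.mod_eq_of_lt (by omega)]; omega
        rw [h2, if_neg (by omega)]
        exact hy
      by_cases hcase2 : j < n - 1 - u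
      · have hb2 : 2 ≤ b := by omega
        have hγne : γ ≠ 0 := hbγ hb2
        have h2 : (u + j) % n = u + j := Nat.mod_eq_of_lt (by omega)
        rw [h2, if_pos (by omega), hy, add_zero]
        have hV1 := hV j (by omega)
        rw [← hV1]
        congr 1
        have : u % (n - 1) = u := Nat.mod_eq_of_lt (by omega)
        rw [this, pow_add]; ring
      · -- j > n - 1 - u
        have hjgt : n - 1 - u < j := by omega
        have hb2 : 2 ≤ b := by omega
        have hγne : γ ≠ 0 := hbγ hb2
        have hge : n ≤ u + j := by omega
        have h2 : (u + j) % n = u + j - n := by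
          rw [Nat.mod_eq_sub_mod hge, Nat.mod_eq_of_lt (by omega)]
        rw [h2, if_pos (by omega), hy, add_zero]
        have hV1 := hV (j - 1) (by omega)
        rw [← hV1]
        congr 1
        have harg : γ ^ (j - 1) * γ ^ (u % (n - 1)) = γ ^ (u + j - n) := by
          rw [← pow_add, hγmod hγne ((j - 1) + u % (n - 1)), hγmod hγne (u + j - n)]
          congr 1
          by_cases hun : u = n - 1
          · rw [hun, Nat.mod_self, Nat.mod_eq_of_lt (by omega), Nat.mod_eq_of_lt (by omega)]
            omega
          · have hu2 : u % (n - 1) = u := Nat.mod_eq_of_lt (by omega)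
            rw [hu2]
            have hbig : n - 1 ≤ (j - 1) + u := by omega
            rw [Nat.mod_eq_sub_mod hbig, Nat.mod_eq_of_lt (by omega),
              Nat.mod_eq_of_lt (by omega)]
            omega
        rw [harg]
  -- linear independence and cardinalities
  have hli : ∀ d, d ≤ k → LinearIndependent F fun j : Fin d => γ ^ (j : ℕ) :=
    fun d hd => aux_li k d hd hk γ hγ
  have hVcard : ∀ g : E, g ≠ 0 →
      ({x : E | ∀ j < b, Algebra.trace F E (g * (γ ^ j * x)) = 0} : Set E).ncard
        = q ^ (k - b) := by
    intro g hg
    rw [← Nat.card_coe_set_eq, aux_ker_card k b hkb hk γ (hli b hkb) g hg, hF]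
  have hV'card : ∀ g : E, g ≠ 0 →
      ({x : E | ∀ t < b - 1, Algebra.trace F E (g * (γ ^ t * x)) = 0} : Set E).ncard
        = q ^ (k - (b - 1)) := by
    intro g hg
    rw [← Nat.card_coe_set_eq, aux_ker_card k (b - 1) (by omega) hk γ
      (hli (b - 1) (by omega)) g hg, hF]
  -- the two claims
  have hclaim0 : ∀ g : E, (∀ t < b - 1, Algebra.trace F E (g * (γ ^ t * 1)) = 0) →
      ∀ u, n - b ≤ u → u ≤ n - 2 →
      (∀ t < b - 1, Algebra.trace F E (g * (γ ^ t * γ ^ u)) = 0) →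
      (∀ j < b, Algebra.trace F E (g * (γ ^ j * γ ^ u)) = 0) := by
    intro g h0 u hu1 hu2 hV' j hj
    have hb2 : 2 ≤ b := by omega
    have hγne : γ ≠ 0 := hbγ hb2
    by_cases hjb : j < b - 1
    · exact hV' j hjb
    · have hjeq : j = b - 1 := by omega
      subst hjeq
      have ht0 : b - 1 + u - (n - 1) < b - 1 := by omega
      have h1 := h0 (b - 1 + u - (n - 1)) ht0
      rw [← h1]
      congr 1
      have : γ ^ (b - 1) * γ ^ u = γ ^ (b - 1 + u - (n - 1)) * 1 := by
        rw [mul_one, ← pow_add, hγmod hγne (b - 1 + u),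
          hγmod hγne (b - 1 + u - (n - 1))]
        congr 1
        have hbig : n - 1 ≤ b - 1 + u := by omega
        rw [Nat.mod_eq_sub_mod hbig]
      rw [this]
  have hclaim : ∀ g : E, ∀ u1 u2 : ℕ, n - b ≤ u1 → u1 ≤ n - 2 → n - b ≤ u2 → u2 ≤ n - 2 →
      u2 < u1 →
      (∀ t < b - 1, Algebra.trace F E (g * (γ ^ t * γ ^ u1)) = 0) →
      (∀ t < b - 1, Algebra.trace F E (g * (γ ^ t * γ ^ u2)) = 0) →
      (∀ j < b, Algebra.trace F E (g * (γ ^ j * γ ^ u2)) = 0) := by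
    intro g u1 u2 h11 h12 h21 h22 hlt hV1 hV2 j hj
    by_cases hjb : j < b - 1
    · exact hV2 j hjb
    · have hjeq : j = b - 1 := by omega
      subst hjeq
      have ht : b - 1 + u2 - u1 < b - 1 := by omega
      have h1 := hV1 (b - 1 + u2 - u1) ht
      rw [← h1]
      have hexp : b - 1 + u2 - u1 + u1 = b - 1 + u2 := by omega
      rw [← pow_add, ← pow_add, hexp]
  -- case analysis on codewords
  have hcase1 : ∀ y : F, y ≠ 0 → (ZW (cw 0 y)).ncard = 0 := by
    intro y hy
    have : ZW (cw 0 y) = ∅ := by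
      rw [Set.eq_empty_iff_forall_notMem]
      intro i hi
      have h := hi 0 (by omega)
      simp only [hcwdef, zero_mul, map_zero, zero_add] at h
      exact hy h
    rw [this, Set.ncard_empty]
  have hcase2 : ∀ (g : E) (y : F), g ≠ 0 → y ≠ 0 → (ZW (cw g y)).ncard ≤ q ^ (k - b) := by
    intro g y hg hy
    set S : Set E := {x | ∀ j < b, Algebra.trace F E (g * (γ ^ j * x)) + y = 0} with hSdef
    set V : Set E := {x | ∀ j < b, Algebra.trace F E (g * (γ ^ j * x)) = 0} with hVdef
    have hsub : ZW (cw g y) ⊆ P ⁻¹' S := by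
      intro i hi
      by_cases hA : i.val + b < n
      · have h := (hwinA g y i hA).mp hi
        have hPi : P i = γ ^ i.val := by
          rw [hPdef]; simp only []; rw [if_pos (by omega)]
        simp only [Set.mem_preimage, hPi, hSdef, Set.mem_setOf_eq]
        exact h
      · have h := ((hwinB g y i (by omega)).mp hi).1
        exact absurd h hy
    have hSV : S.ncard ≤ V.ncard := by
      rcases Set.eq_empty_or_nonempty S with hS | ⟨x0, hx0⟩
      · rw [hS, Set.ncard_empty]; exact Nat.zero_le _
      · apply Set.ncard_le_ncard_of_injOn (fun x => x - x0)
        · intro x hx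
          rw [hVdef]
          intro j hj
          have h1 := hx j hj
          have h2 := hx0 j hj
          have harg : g * (γ ^ j * (x - x0)) = g * (γ ^ j * x) - g * (γ ^ j * x0) := by ring
          rw [harg, map_sub]
          linear_combination h1 - h2
        · intro a _ c _ h
          simpa using h
    calc (ZW (cw g y)).ncard ≤ (P ⁻¹' S).ncard := Set.ncard_le_ncard hsub (Set.toFinite _)
      _ = S.ncard := hPcard S
      _ ≤ V.ncard := hSV
      _ = q ^ (k - b) := hVcard g hg
  have hcase3 : ∀ g : E, g ≠ 0 → (ZW (cw g 0)).ncard ≤ q ^ (k - b) := by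
    intro g hg
    set V : Set E := {x | ∀ j < b, Algebra.trace F E (g * (γ ^ j * x)) = 0} with hVdef
    set V' : Set E := {x | ∀ t < b - 1, Algebra.trace F E (g * (γ ^ t * x)) = 0} with hV'def
    have h0V : (0 : E) ∈ V := by
      rw [hVdef]; intro j hj; simp
    have hlastPV : ((n - 1 : ℕ) : ZMod n) ∈ P ⁻¹' V := by
      have hv : ((n - 1 : ℕ) : ZMod n).val = n - 1 := ZMod.val_cast_of_lt (by omega)
      have hP0 : P ((n - 1 : ℕ) : ZMod n) = 0 := by
        simp only [hPdef, hv]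
        rw [if_neg (by omega)]
      simp only [Set.mem_preimage, hP0]
      exact h0V
    set B' : Set (ZMod n) :=
      {i | n - b ≤ i.val ∧ i.val ≤ n - 2 ∧ γ ^ i.val ∈ V' ∧ γ ^ i.val ∉ V} with hB'def
    have hsub : ZW (cw g 0) ⊆ (P ⁻¹' V) ∪ B' := by
      intro i hi
      by_cases hA : i.val + b < n
      · left
        have h := (hwinA g 0 i hA).mp hi
        have hPi : P i = γ ^ i.val := by simp only [hPdef]; rw [if_pos (by omega)]
        simp only [Set.mem_preimage, hPi, hVdef, Set.mem_setOf_eq]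
        intro j hj
        have h2 := h j hj
        rwa [add_zero] at h2
      · have h := ((hwinB g 0 i (by have := hival i; omega)).mp hi).2
        by_cases hlast : i.val = n - 1
        · left
          have hPi : P i = 0 := by simp only [hPdef, hlast]; rw [if_neg (by omega)]
          simp only [Set.mem_preimage, hPi]
          exact h0V
        · have hu2 : i.val ≤ n - 2 := by have := hival i; omega
          have hmod : i.val % (n - 1) = i.val := Nat.mod_eq_of_lt (by omega)
          rw [hmod] at h
          by_cases hVm : γ ^ i.val ∈ V
          · left
            have hPi : P i = γ ^ i.val := by simp only [hPdef]; rw [if_pos (by omega)]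
            simp only [Set.mem_preimage, hPi]
            exact hVm
          · right
            exact ⟨by have := hival i; omega, hu2, h, hVm⟩
    by_cases hBe : B' = ∅
    · rw [hBe, Set.union_empty] at hsub
      calc (ZW (cw g 0)).ncard ≤ (P ⁻¹' V).ncard :=
            Set.ncard_le_ncard hsub (Set.toFinite _)
        _ = V.ncard := hPcard V
        _ = q ^ (k - b) := hVcard g hg
    · obtain ⟨i0, hi0⟩ := Set.nonempty_iff_ne_empty.mpr hBe
      obtain ⟨hi01, hi02, hi03, hi04⟩ := hi0
      have hBsingle : B' ⊆ {i0} := by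
        intro i' hi'
        obtain ⟨h1, h2, h3, h4⟩ := hi'
        have hval : i'.val = i0.val := by
          by_contra hne
          rcases lt_or_gt_of_ne hne with hlt | hgt
          · exact h4 (hclaim g i0.val i'.val hi01 hi02 h1 h2 hlt hi03 h3)
          · exact hi04 (hclaim g i'.val i0.val h1 h2 hi01 hi02 hgt h3 hi03)
        exact ZMod.val_injective n hval
      have h1notV' : (1 : E) ∉ V' := by
        intro h1V'
        apply hi04
        exact hclaim0 g (fun t ht => h1V' t ht) i0.val hi01 hi02 (fun t ht => hi03 t ht)
      have hlastnot : ((n - 1 : ℕ) : ZMod n) ∉ ZW (cw g 0) := by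
        intro hmem
        have hv : ((n - 1 : ℕ) : ZMod n).val = n - 1 := ZMod.val_cast_of_lt (by omega)
        have h := ((hwinB g 0 _ (by rw [hv]; omega)).mp hmem).2
        rw [hv, Nat.mod_self] at h
        apply h1notV'
        intro t ht
        have h2 := h t ht
        rwa [pow_zero] at h2
      have hsub2 : ZW (cw g 0) ⊆ ((P ⁻¹' V) \ {((n - 1 : ℕ) : ZMod n)}) ∪ {i0} := by
        intro i hi
        rcases hsub hi with hPV | hB
        · left
          refine ⟨hPV, ?_⟩
          simp only [Set.mem_singleton_iff]
          intro heq
          rw [heq] at hi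
          exact hlastnot hi
        · right; exact hBsingle hB
      have hVpos : 1 ≤ V.ncard := by
        rw [hVcard g hg]
        have : 0 < q := by omega
        exact pow_pos this _
      have hPVpos : 1 ≤ (P ⁻¹' V).ncard := by rw [hPcard V]; exact hVpos
      calc (ZW (cw g 0)).ncard
          ≤ (((P ⁻¹' V) \ {((n - 1 : ℕ) : ZMod n)}) ∪ {i0}).ncard :=
            Set.ncard_le_ncard hsub2 (Set.toFinite _)
        _ ≤ ((P ⁻¹' V) \ {((n - 1 : ℕ) : ZMod n)}).ncard + ({i0} : Set (ZMod n)).ncard :=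
            Set.ncard_union_le _ _
        _ = ((P ⁻¹' V).ncard - 1) + 1 := by
            rw [Set.ncard_diff_singleton_of_mem hlastPV, Set.ncard_singleton]
        _ = (P ⁻¹' V).ncard := by omega
        _ = V.ncard := hPcard V
        _ = q ^ (k - b) := hVcard g hg
  -- existence of an optimal codeword
  have hKcard : ({x : E | ∀ t < b - 1, Algebra.trace F E (1 * (γ ^ t * x)) = 0}).ncard
      = q ^ (k - (b - 1)) := by
    rw [← Nat.card_coe_set_eq, aux_ker_card k (b - 1) (by omega) hk γ
      (hli (b - 1) (by omega)) 1 one_ne_zero, hF]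
  have hex : ∃ g0 : E, g0 ≠ 0 ∧ ∀ t < b - 1, Algebra.trace F E (g0 * (γ ^ t * 1)) = 0 := by
    have h2 : 1 < ({x : E | ∀ t < b - 1, Algebra.trace F E (1 * (γ ^ t * x)) = 0}).ncard := by
      rw [hKcard]
      calc 1 < q := by omega
        _ ≤ q ^ (k - (b - 1)) := Nat.le_self_pow (by omega) q
    obtain ⟨g0, hg0K, hg0⟩ := Set.exists_ne_of_one_lt_ncard h2 0
    refine ⟨g0, hg0, ?_⟩
    intro t ht
    have h3 := hg0K t ht
    rw [← h3]
    congr 1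
    ring
  constructor
  · -- the minimum is attained
    obtain ⟨g0, hg0, hg0V'⟩ := hex
    refine ⟨cw g0 0, ⟨(g0, 0), rfl⟩, ?_, ?_⟩
    · intro hzero
      obtain ⟨x, hx⟩ : ∃ x : E, Algebra.trace F E (g0 * x) ≠ 0 := by
        by_contra hall
        push_neg at hall
        exact hg0 (htr g0 hall)
      obtain ⟨i, rfl⟩ := hPsurj x
      have h4 := congrFun hzero i
      simp only [hcwdef, Pi.zero_apply, add_zero] at h4
      exact hx h4
    · rw [hbwt]
      have hZWeq : ZW (cw g0 0)
          = P ⁻¹' {x : E | ∀ j < b, Algebra.trace F E (g0 * (γ ^ j * x)) = 0} := by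
        ext i
        by_cases hA : i.val + b < n
        · rw [hwinA g0 0 i hA]
          have hPi : P i = γ ^ i.val := by simp only [hPdef]; rw [if_pos (by omega)]
          simp only [Set.mem_preimage, hPi, Set.mem_setOf_eq, add_zero]
        · have hBi : n - b ≤ i.val := by have := hival i; omega
          rw [hwinB g0 0 i hBi]
          by_cases hlast : i.val = n - 1
          · have hPi : P i = 0 := by simp only [hPdef, hlast]; rw [if_neg (by omega)]
            have hmod : i.val % (n - 1) = 0 := by rw [hlast, Nat.mod_self]
            rw [hmod]
            simp only [Set.mem_preimage, hPi, Set.mem_setOf_eq]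
            constructor
            · intro _ j hj
              simp
            · intro _
              refine ⟨by trivial, fun t ht => ?_⟩
              rw [pow_zero]
              exact hg0V' t ht
          · have hu2 : i.val ≤ n - 2 := by have := hival i; omega
            have hmod : i.val % (n - 1) = i.val := Nat.mod_eq_of_lt (by omega)
            have hPi : P i = γ ^ i.val := by simp only [hPdef]; rw [if_pos (by omega)]
            rw [hmod]
            simp only [Set.mem_preimage, hPi, Set.mem_setOf_eq]
            constructor
            · rintro ⟨-, hV'⟩
              exact hclaim0 g0 hg0V' i.val hBi hu2 hV'
            · intro hV
              exact ⟨by trivial, fun t ht => hV t (by omega)⟩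
      rw [hZWeq, hPcard, hVcard g0 hg0]
  · -- lower bound
    rintro w ⟨c, hc, hc0, rfl⟩
    obtain ⟨⟨g, y⟩, rfl⟩ := hc
    have hcweq : φ (g, y) = cw g y := rfl
    rw [hcweq] at hc0 ⊢
    rw [hbwt]
    have hZle : (ZW (cw g y)).ncard ≤ q ^ (k - b) := by
      by_cases hg : g = 0
      · subst hg
        have hy : y ≠ 0 := by
          intro hy
          subst hy
          apply hc0
          funext i
          simp [hcwdef]
        rw [hcase1 y hy]
        exact Nat.zero_le _
      · by_cases hy : y = 0
        · subst hy
          exact hcase3 g hg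
        · exact hcase2 g y hg hy
    exact Nat.sub_le_sub_left hZle n
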